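/- Let γ(p) = 1 − (1 + 4^{-p/3})^{-p/2} · exp(−p·4^{p/3}(1 + 4^{p/3}) / (2(4^p − 1))). Then lim_{p→∞} γ(p)^{1/p} = 4^{-1/3}. -/

import Mathlib

open Filter

set_option maxHeartbeats 1000000 in
private lemma gamma_bounds_aux (q : ℕ) (hq : 1 ≤ q)
    (h1 : 2 * (q:ℝ) * (4:ℝ) ^ (-(q:ℝ)/3) ≤ 1) :
    (1/4 : ℝ) * (4:ℝ) ^ (-(q:ℝ)/3) ≤
      1 - (1 + (4 : ℝ) ^ (-(q : ℝ) / 3)) ^ (-(q : ℝ) / 2) *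
            Real.exp (-(q : ℝ) * (4 : ℝ) ^ ((q : ℝ) / 3) * (1 + (4 : ℝ) ^ ((q : ℝ) / 3)) /
              (2 * ((4 : ℝ) ^ (q : ℝ) - 1))) ∧
    1 - (1 + (4 : ℝ) ^ (-(q : ℝ) / 3)) ^ (-(q : ℝ) / 2) *
            Real.exp (-(q : ℝ) * (4 : ℝ) ^ ((q : ℝ) / 3) * (1 + (4 : ℝ) ^ ((q : ℝ) / 3)) /
              (2 * ((4 : ℝ) ^ (q : ℝ) - 1)))
      ≤ 3 * (q:ℝ) * (4:ℝ) ^ (-(q:ℝ)/3) := by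
  set p : ℝ := (q:ℝ) with hp_def
  have hp : (1:ℝ) ≤ p := Nat.one_le_cast.2 hq
  set y : ℝ := (4:ℝ) ^ (p/3) with hy_def
  have hy0 : 0 < y := Real.rpow_pos_of_pos (by norm_num) _
  have hy1 : (1:ℝ) ≤ y := by
    have := Real.rpow_le_rpow_of_exponent_le (by norm_num : (1:ℝ) ≤ 4)
      (by positivity : (0:ℝ) ≤ p/3)
    simpa using this
  set x : ℝ := y⁻¹ with hx_def
  have hx_eq : (4:ℝ) ^ (-p/3) = x := by
    rw [neg_div, Real.rpow_neg (by norm_num)]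
  have h4p : (4:ℝ) ^ p = y ^ (3:ℕ) := by
    rw [hy_def, ← Real.rpow_natCast ((4:ℝ) ^ (p/3)) 3, ← Real.rpow_mul (by norm_num)]
    norm_num
  have h4p4 : (4:ℝ) ≤ (4:ℝ) ^ p := by
    calc (4:ℝ) = 4 ^ (1:ℝ) := by norm_num
    _ ≤ 4 ^ p := Real.rpow_le_rpow_of_exponent_le (by norm_num) hp
  have hy3 : (4:ℝ) ≤ y ^ 3 := h4p ▸ h4p4
  rw [hx_eq] at h1 ⊢
  have hx0 : 0 < x := by positivity
  have hxy : x * y = 1 := inv_mul_cancel₀ hy0.ne'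
  have hxy3 : x * y ^ 3 = y ^ 2 := by rw [hx_def]; field_simp
  have hx1 : x ≤ 1 := inv_le_one_of_one_le₀ hy1
  set t : ℝ := p * y * (1 + y) / (2 * (y ^ 3 - 1)) with ht_def
  have hD : (0:ℝ) < 2 * (y ^ 3 - 1) := by nlinarith
  have ht0 : 0 ≤ t := by
    apply div_nonneg _ hD.le
    positivity
  have hp0 : (0:ℝ) ≤ p := by linarith
  have h_a : 4 * x ≤ y ^ 2 := by
    nlinarith [mul_nonneg hx0.le (by linarith : (0:ℝ) ≤ y^3 - 4)]
  have h_b : y ≤ y ^ 2 := by nlinarith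
  have ht_up : t ≤ 2 * p * x := by
    rw [ht_def, div_le_iff₀ hD]
    nlinarith [mul_le_mul_of_nonneg_left h_a hp0, mul_le_mul_of_nonneg_left h_b hp0, hxy3,
      mul_nonneg hp0 hx0.le]
  have ht_lo : p / 2 * x ≤ t := by
    rw [ht_def, le_div_iff₀ hD]
    nlinarith [hxy3, mul_nonneg hp0 hx0.le, mul_nonneg hp0 hy0.le]
  have harg : -p * y * (1 + y) / (2 * ((4:ℝ) ^ p - 1)) = -t := by
    rw [h4p, ht_def]; ring
  rw [harg]
  set A : ℝ := (1 + x) ^ (-p/2) with hA_def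
  have hA1 : A ≤ 1 := by
    apply Real.rpow_le_one_of_one_le_of_nonpos (by linarith)
    linarith
  have hA0 : 0 < A := Real.rpow_pos_of_pos (by linarith) _
  have hA_lo : 1 - p/2 * x ≤ A := by
    have hlog : Real.log (1 + x) ≤ x := by
      have := Real.log_le_sub_one_of_pos (by linarith : (0:ℝ) < 1 + x)
      linarith
    have h1x : (0:ℝ) < 1 + x := by linarith
    rw [hA_def, Real.rpow_def_of_pos h1x]
    have hl0 : 0 ≤ Real.log (1 + x) := Real.log_nonneg (by linarith)
    calc 1 - p/2 * x ≤ Real.exp (-(p/2*x)) := by linarith [Real.add_one_le_exp (-(p/2*x))]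
    _ ≤ Real.exp (Real.log (1+x) * (-p/2)) := Real.exp_le_exp.2 (by nlinarith)
  set B : ℝ := Real.exp (-t) with hB_def
  have hB0 : 0 < B := Real.exp_pos _
  have hB1 : B ≤ 1 := Real.exp_le_one_iff.2 (by linarith)
  have hB_lo : 1 - t ≤ B := by
    have := Real.add_one_le_exp (-t)
    linarith
  have hB_up : B ≤ 1 / (1 + t) := by
    rw [hB_def, Real.exp_neg, div_eq_inv_mul, mul_one]
    exact inv_anti₀ (by linarith) (by linarith [Real.add_one_le_exp t])
  have ht1 : t ≤ 1 := le_trans ht_up h1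
  clear_value t x y A B p
  have h7 : 1/(1+t) ≤ 1 - t/2 := by
    rw [div_le_iff₀ (by linarith)]
    nlinarith
  have h5 : A * B ≤ B := by
    calc A * B ≤ 1 * B := mul_le_mul_of_nonneg_right hA1 hB0.le
    _ = B := one_mul B
  constructor
  · nlinarith [mul_nonneg (by linarith : (0:ℝ) ≤ p - 1) hx0.le]
  · nlinarith [mul_nonneg (sub_nonneg.2 hA1) (sub_nonneg.2 hB1),
      mul_nonneg (by linarith : (0:ℝ) ≤ p) hx0.le]

/-- With `γ(p) = 1 - (1 + 4^{-p/3})^{-p/2} exp(-p·4^{p/3}(1 + 4^{p/3})/(2(4^p - 1)))`,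
one has `γ(p)^{1/p} → 4^{-1/3}` as `p → ∞`. -/
theorem stmt_16 :
    Tendsto (fun q : ℕ =>
        (1 - (1 + (4 : ℝ) ^ (-(q : ℝ) / 3)) ^ (-(q : ℝ) / 2) *
            Real.exp (-(q : ℝ) * (4 : ℝ) ^ ((q : ℝ) / 3) * (1 + (4 : ℝ) ^ ((q : ℝ) / 3)) /
              (2 * ((4 : ℝ) ^ (q : ℝ) - 1)))) ^ ((1 : ℝ) / (q : ℝ)))
      atTop (nhds ((4 : ℝ) ^ (-(1 : ℝ) / 3))) := by
  -- 2 q 4^{-q/3} → 0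
  have h2px : Tendsto (fun q : ℕ => 2 * (q:ℝ) * (4:ℝ) ^ (-(q:ℝ)/3)) atTop (nhds 0) := by
    have hr0 : (0:ℝ) < (4:ℝ) ^ (-(1:ℝ)/3) := Real.rpow_pos_of_pos (by norm_num) _
    have hr1 : (4:ℝ) ^ (-(1:ℝ)/3) < 1 :=
      Real.rpow_lt_one_of_one_lt_of_neg (by norm_num) (by norm_num)
    have hs : Summable (fun n : ℕ => (n:ℝ) ^ 1 * ((4:ℝ) ^ (-(1:ℝ)/3)) ^ n) :=
      summable_pow_mul_geometric_of_norm_lt_one 1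
        (by rw [Real.norm_eq_abs, abs_of_pos hr0]; exact hr1)
    have h := hs.tendsto_atTop_zero
    have h2 := h.const_mul (2:ℝ)
    rw [mul_zero] at h2
    refine h2.congr fun q => ?_
    have : ((4:ℝ) ^ (-(1:ℝ)/3)) ^ q = (4:ℝ) ^ (-(q:ℝ)/3) := by
      rw [← Real.rpow_natCast ((4:ℝ) ^ (-(1:ℝ)/3)) q, ← Real.rpow_mul (by norm_num)]
      ring_nf
    rw [this]; ring
  -- lower comparison function
  have hL : Tendsto (fun q : ℕ => (1/4 : ℝ) ^ ((1:ℝ)/(q:ℝ)) * (4:ℝ) ^ (-(1:ℝ)/3)) atTop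
      (nhds ((4:ℝ) ^ (-(1:ℝ)/3))) := by
    have h1 : Tendsto (fun q : ℕ => (1/4 : ℝ) ^ ((1:ℝ)/(q:ℝ))) atTop (nhds 1) := by
      have hc : ContinuousAt (fun z : ℝ => (1/4:ℝ) ^ z) 0 :=
        Real.continuousAt_const_rpow (by norm_num)
      have := hc.tendsto.comp tendsto_one_div_atTop_nhds_zero_nat
      simpa [Function.comp_def] using this
    simpa using h1.mul_const ((4:ℝ) ^ (-(1:ℝ)/3))
  -- upper comparison function
  have hU : Tendsto (fun q : ℕ => (3 * (q:ℝ)) ^ ((1:ℝ)/(q:ℝ)) * (4:ℝ) ^ (-(1:ℝ)/3)) atTop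
      (nhds ((4:ℝ) ^ (-(1:ℝ)/3))) := by
    have hlog : Tendsto (fun q : ℕ => Real.log (q:ℝ) / (q:ℝ)) atTop (nhds 0) := by
      have h := (Real.isLittleO_log_id_atTop.tendsto_div_nhds_zero).comp
        (tendsto_natCast_atTop_atTop (R := ℝ))
      simpa [Function.comp_def] using h
    have hc : Tendsto (fun q : ℕ => Real.log 3 * ((1:ℝ)/(q:ℝ))) atTop (nhds 0) := by
      simpa using (tendsto_one_div_atTop_nhds_zero_nat.const_mul (Real.log 3))
    have hsum : Tendsto (fun q : ℕ => Real.log 3 * ((1:ℝ)/(q:ℝ)) + Real.log (q:ℝ) / (q:ℝ))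
        atTop (nhds 0) := by simpa using hc.add hlog
    have hexp : Tendsto (fun q : ℕ =>
        Real.exp (Real.log 3 * ((1:ℝ)/(q:ℝ)) + Real.log (q:ℝ) / (q:ℝ))) atTop (nhds 1) := by
      simpa [Function.comp_def] using (Real.continuous_exp.tendsto 0).comp hsum
    have heq : ∀ᶠ q : ℕ in atTop,
        Real.exp (Real.log 3 * ((1:ℝ)/(q:ℝ)) + Real.log (q:ℝ) / (q:ℝ))
          = (3 * (q:ℝ)) ^ ((1:ℝ)/(q:ℝ)) := by
      filter_upwards [eventually_ge_atTop 1] with q hq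
      have hq0 : (0:ℝ) < (q:ℝ) := by exact_mod_cast hq
      rw [Real.rpow_def_of_pos (by positivity), Real.log_mul (by norm_num) hq0.ne']
      ring_nf
    have := hexp.congr' heq
    simpa using this.mul_const ((4:ℝ) ^ (-(1:ℝ)/3))
  have hev : ∀ᶠ q : ℕ in atTop, 1 ≤ q ∧ 2 * (q:ℝ) * (4:ℝ) ^ (-(q:ℝ)/3) ≤ 1 := by
    filter_upwards [eventually_ge_atTop 1,
      h2px.eventually_le_const (by norm_num : (0:ℝ) < 1)] with q h1 h2
    exact ⟨h1, h2⟩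
  refine tendsto_of_tendsto_of_tendsto_of_le_of_le' hL hU ?_ ?_
  · filter_upwards [hev] with q hq
    obtain ⟨hq1, hq2⟩ := hq
    have hq0 : (0:ℝ) < (q:ℝ) := by exact_mod_cast hq1
    obtain ⟨hlo, _⟩ := gamma_bounds_aux q hq1 hq2
    have hx0 : (0:ℝ) < (4:ℝ) ^ (-(q:ℝ)/3) := Real.rpow_pos_of_pos (by norm_num) _
    have hpow : ((1/4 : ℝ) * (4:ℝ) ^ (-(q:ℝ)/3)) ^ ((1:ℝ)/(q:ℝ))
        ≤ (1 - (1 + (4 : ℝ) ^ (-(q : ℝ) / 3)) ^ (-(q : ℝ) / 2) *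
            Real.exp (-(q : ℝ) * (4 : ℝ) ^ ((q : ℝ) / 3) * (1 + (4 : ℝ) ^ ((q : ℝ) / 3)) /
              (2 * ((4 : ℝ) ^ (q : ℝ) - 1)))) ^ ((1:ℝ)/(q:ℝ)) :=
      Real.rpow_le_rpow (by positivity) hlo (by positivity)
    have hexp : -(q:ℝ)/3 * ((1:ℝ)/(q:ℝ)) = -1/3 := by field_simp
    refine le_trans (le_of_eq ?_) hpow
    rw [Real.mul_rpow (by norm_num) hx0.le, ← Real.rpow_mul (by norm_num : (0:ℝ) ≤ 4), hexp]
  · filter_upwards [hev] with q hq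
    obtain ⟨hq1, hq2⟩ := hq
    have hq0 : (0:ℝ) < (q:ℝ) := by exact_mod_cast hq1
    obtain ⟨hlo, hhi⟩ := gamma_bounds_aux q hq1 hq2
    have hx0 : (0:ℝ) < (4:ℝ) ^ (-(q:ℝ)/3) := Real.rpow_pos_of_pos (by norm_num) _
    have hγ0 : (0:ℝ) ≤ 1 - (1 + (4 : ℝ) ^ (-(q : ℝ) / 3)) ^ (-(q : ℝ) / 2) *
            Real.exp (-(q : ℝ) * (4 : ℝ) ^ ((q : ℝ) / 3) * (1 + (4 : ℝ) ^ ((q : ℝ) / 3)) /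
              (2 * ((4 : ℝ) ^ (q : ℝ) - 1))) := le_trans (by positivity) hlo
    have hpow : (1 - (1 + (4 : ℝ) ^ (-(q : ℝ) / 3)) ^ (-(q : ℝ) / 2) *
            Real.exp (-(q : ℝ) * (4 : ℝ) ^ ((q : ℝ) / 3) * (1 + (4 : ℝ) ^ ((q : ℝ) / 3)) /
              (2 * ((4 : ℝ) ^ (q : ℝ) - 1)))) ^ ((1:ℝ)/(q:ℝ))
        ≤ (3 * (q:ℝ) * (4:ℝ) ^ (-(q:ℝ)/3)) ^ ((1:ℝ)/(q:ℝ)) :=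
      Real.rpow_le_rpow hγ0 hhi (by positivity)
    have hexp : -(q:ℝ)/3 * ((1:ℝ)/(q:ℝ)) = -1/3 := by field_simp
    refine le_trans hpow (le_of_eq ?_)
    rw [Real.mul_rpow (by positivity) hx0.le, ← Real.rpow_mul (by norm_num : (0:ℝ) ≤ 4), hexp]
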